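/- Let σ be a nondecreasing sigmoidal function satisfying (Σ1)–(Σ5) with parameters m ≥ 2 and β > m + 1. Then for every s ∈ {1, …, m}, every j ∈ {0, …, s−1}, and every x ∈ ℝ, one has ∑_{ℓ=0}^{j} C(j,ℓ) (s)_{j−ℓ} (−1)^{j+ℓ} 𝒜_ℓ(φ_σ^{(ℓ+s−j)}, x) = 0, where 𝒜_ν(Φ, x) := ∑_{k∈ℤ} Φ(x−k)(k−x)^ν, C(j,ℓ) is the binomial coefficient, and (s)_r := s(s−1)⋯(s−r+1) is the falling factorial (with (s)_0 := 1). -/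

import Mathlib

open Filter Topology MeasureTheory

/-- The density (kernel) function generated by a sigmoidal function. -/
noncomputable def phiFn (σ : ℝ → ℝ) (x : ℝ) : ℝ := (σ (x + 1) - σ (x - 1)) / 2

/-- σ is a (measurable) sigmoidal function. -/
def Sigmoidal (σ : ℝ → ℝ) : Prop :=
  Measurable σ ∧ Tendsto σ atBot (𝓝 0) ∧ Tendsto σ atTop (𝓝 1)

/-- (Σ1): σ(x) - 1/2 is an odd function. -/
def Sigma1 (σ : ℝ → ℝ) : Prop := ∀ x : ℝ, σ (-x) - 1/2 = -(σ x - 1/2)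

/-- (Σ2): σ ∈ C²(ℝ) and σ is concave on [0, +∞). -/
def Sigma2 (σ : ℝ → ℝ) : Prop := ContDiff ℝ 2 σ ∧ ConcaveOn ℝ (Set.Ici 0) σ

/-- (Σ3): σ(x) = O(|x|^{-α-1}) as x → -∞, with α > 0. -/
def Sigma3 (σ : ℝ → ℝ) (α : ℝ) : Prop :=
  0 < α ∧ σ =O[atBot] fun x : ℝ => |x| ^ (-α - 1)

/-- (Σ4): σ ∈ C^m(ℝ), m ≥ 2, and for each s = 1,…,m there are constants
`K s, C s > 0` with |σ^{(s)}(x)| ≤ C s * |x|^{-β-1} for |x| ≥ K s, where β > m + 1. -/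
def Sigma4 (σ : ℝ → ℝ) (m : ℕ) (β : ℝ) (K C : ℕ → ℝ) : Prop :=
  2 ≤ m ∧ (m : ℝ) + 1 < β ∧ ContDiff ℝ m σ ∧
    ∀ s : ℕ, 1 ≤ s → s ≤ m → 0 < K s ∧ 0 < C s ∧
      ∀ x : ℝ, K s ≤ |x| → |iteratedDeriv s σ x| ≤ C s * |x| ^ (-β - 1)

/-- Algebraic moment of order ν of Φ. -/
noncomputable def algMoment (Φ : ℝ → ℝ) (ν : ℕ) (x : ℝ) : ℝ :=
  ∑' k : ℤ, Φ (x - (k : ℝ)) * ((k : ℝ) - x) ^ ν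

/-- (Σ5): the algebraic moments of order j = 1,…,m of φ_σ are constants A j. -/
def Sigma5 (σ : ℝ → ℝ) (m : ℕ) (A : ℕ → ℝ) : Prop :=
  ∀ j : ℕ, 1 ≤ j → j ≤ m → ∀ x : ℝ, algMoment (phiFn σ) j x = A j

/-- Truncated algebraic moment of order ν of Φ (associated with integers a < b). -/
noncomputable def truncMoment (Φ : ℝ → ℝ) (ν : ℕ) (a b : ℤ) (n : ℕ) (u : ℝ) : ℝ :=
  ∑ k ∈ Finset.Icc ((n : ℤ) * a) ((n : ℤ) * b), Φ (u - (k : ℝ)) * ((k : ℝ) - u) ^ ν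

/-- The ν-th discrete absolute moment function of Φ (before taking sup over u). -/
noncomputable def discMoment (Φ : ℝ → ℝ) (ν : ℝ) (u : ℝ) : ℝ :=
  ∑' k : ℤ, |Φ (u - (k : ℝ))| * |u - (k : ℝ)| ^ ν

/-- The Riemann zeta function (as a real series), ζ(p) = ∑_{i≥1} i^{-p}. -/
noncomputable def zetaR (p : ℝ) : ℝ := ∑' i : ℕ, ((i : ℝ) + 1) ^ (-p)

/-- The NN operator F_n activated by σ. -/
noncomputable def Fop (σ : ℝ → ℝ) (f : ℝ → ℝ) (a b : ℝ) (n : ℕ) (x : ℝ) : ℝ :=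
  (∑ k ∈ Finset.Icc ⌈(n : ℝ) * a⌉ ⌊(n : ℝ) * b⌋, f ((k : ℝ) / n) * phiFn σ ((n : ℝ) * x - k)) /
    (∑ k ∈ Finset.Icc ⌈(n : ℝ) * a⌉ ⌊(n : ℝ) * b⌋, phiFn σ ((n : ℝ) * x - k))

/-- The modified NN operator F̃_n (integer endpoints a < b). -/
noncomputable def Ftil (σ : ℝ → ℝ) (f : ℝ → ℝ) (a b : ℤ) (n : ℕ) (x : ℝ) : ℝ :=
  ∑ k ∈ Finset.Icc ((n : ℤ) * a) ((n : ℤ) * b), f ((k : ℝ) / n) * phiFn σ ((n : ℝ) * x - (k : ℝ))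

/-- Sup-norm of g on [a,b]. -/
noncomputable def supNormOn (g : ℝ → ℝ) (a b : ℝ) : ℝ := ⨆ x : Set.Icc a b, |g x|

/-- Modulus of continuity of g on [a,b]. -/
noncomputable def modulus (g : ℝ → ℝ) (a b h : ℝ) : ℝ :=
  sSup {y : ℝ | ∃ u ∈ Set.Icc a b, ∃ v ∈ Set.Icc a b, |u - v| ≤ h ∧ y = |g u - g v|}

/-- Discrete absolute moment (natural order ν) of Φ: sup over u of the moment series. -/
noncomputable def dmomentN (Φ : ℝ → ℝ) (ν : ℕ) : ℝ :=
  ⨆ u : ℝ, ∑' k : ℤ, |Φ (u - (k : ℝ))| * |u - (k : ℝ)| ^ ν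


-- scratch: basic lemmas
namespace MRaux

variable {σ : ℝ → ℝ}

lemma phi_contDiff {m : ℕ} (hσ : ContDiff ℝ m σ) : ContDiff ℝ m (phiFn σ) := by
  have h1 : ContDiff ℝ m fun x : ℝ => σ (x + 1) :=
    hσ.comp (contDiff_id.add contDiff_const)
  have h2 : ContDiff ℝ m fun x : ℝ => σ (x - 1) :=
    hσ.comp (contDiff_id.sub contDiff_const)
  exact (h1.sub h2).div_const 2

lemma iteratedDeriv_phi {m r : ℕ} (hσ : ContDiff ℝ m σ) (hr : r ≤ m) :
    iteratedDeriv r (phiFn σ) =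
      fun x => (iteratedDeriv r σ (x + 1) - iteratedDeriv r σ (x - 1)) / 2 := by
  induction r with
  | zero => rfl
  | succ r ih =>
    have hrm : r < m := lt_of_lt_of_le (Nat.lt_succ_self r) hr
    have hF : Differentiable ℝ (iteratedDeriv r σ) :=
      hσ.differentiable_iteratedDeriv r (by exact_mod_cast hrm)
    funext x
    rw [iteratedDeriv_succ, ih (le_of_lt hrm)]
    have h1 : HasDerivAt (fun y : ℝ => iteratedDeriv r σ (y + 1))
        (iteratedDeriv (r + 1) σ (x + 1)) x := by
      have := ((hF (x + 1)).hasDerivAt).comp x ((hasDerivAt_id x).add_const 1)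
      simpa [Function.comp_def, iteratedDeriv_succ, mul_one] using this
    have h2 : HasDerivAt (fun y : ℝ => iteratedDeriv r σ (y - 1))
        (iteratedDeriv (r + 1) σ (x - 1)) x := by
      have := ((hF (x - 1)).hasDerivAt).comp x ((hasDerivAt_id x).sub_const 1)
      simpa [Function.comp_def, iteratedDeriv_succ, mul_one] using this
    exact ((h1.sub h2).div_const 2).deriv

end MRaux
namespace MRaux

/-- comparison of negative powers with shifted base -/
lemma rpow_neg_compare {a b t : ℝ} (ha : 0 < a) (hb : 0 < b) (ht : 0 ≤ t)
    (h : b ≤ 2 * a) : a ^ (-t) ≤ 2 ^ t * b ^ (-t) := by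
  have hat : (0:ℝ) < a ^ t := Real.rpow_pos_of_pos ha t
  have hbt : (0:ℝ) < b ^ t := Real.rpow_pos_of_pos hb t
  have h2t : (0:ℝ) < 2 ^ t := Real.rpow_pos_of_pos (by norm_num) t
  have key : b ^ t ≤ 2 ^ t * a ^ t := by
    rw [← Real.mul_rpow (by norm_num) ha.le]
    exact Real.rpow_le_rpow hb.le h ht
  rw [Real.rpow_neg ha.le, Real.rpow_neg hb.le]
  have h3 : (2 ^ t * a ^ t)⁻¹ ≤ (b ^ t)⁻¹ := by
    apply inv_anti₀ hbt key
  calc (a ^ t)⁻¹ = 2 ^ t * (2 ^ t * a ^ t)⁻¹ := by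
        field_simp
    _ ≤ 2 ^ t * (b ^ t)⁻¹ := mul_le_mul_of_nonneg_left h3 h2t.le

/-- glue an outer decay bound with compact boundedness -/
lemma bound_glue {f : ℝ → ℝ} (hf : Continuous f) {c Kc q : ℝ} (hq : 0 < q) (hK : 1 ≤ Kc)
    (h : ∀ x : ℝ, Kc ≤ |x| → |f x| ≤ c * |x| ^ (-q)) :
    ∃ D : ℝ, 0 < D ∧ ∀ x : ℝ, |f x| ≤ D * (1 + |x|) ^ (-q) := by
  obtain ⟨M, hM⟩ : ∃ M, ∀ x ∈ Set.Icc (-Kc) Kc, ‖f x‖ ≤ M :=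
    (isCompact_Icc).exists_bound_of_continuousOn hf.continuousOn
  set D : ℝ := max (max M 0 * (1 + Kc) ^ q) (|c| * 2 ^ q) + 1 with hD
  have hD0 : 0 < D := by
    have h1 : (0:ℝ) ≤ max M 0 * (1 + Kc) ^ q :=
      mul_nonneg (le_max_right _ _) (Real.rpow_nonneg (by linarith) _)
    have : (0:ℝ) ≤ max (max M 0 * (1 + Kc) ^ q) (|c| * 2 ^ q) := le_trans h1 (le_max_left _ _)
    linarith
  refine ⟨D, hD0, fun x => ?_⟩
  have hx1 : (0:ℝ) < 1 + |x| := by positivity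
  by_cases hx : |x| ≤ Kc
  · have h1 : |f x| ≤ max M 0 := by
      refine le_trans (hM x ?_) (le_max_left _ _)
      constructor <;> [linarith [neg_abs_le x]; linarith [le_abs_self x]]
    have h2 : (1 + Kc) ^ (-q) ≤ (1 + |x|) ^ (-q) :=
      Real.rpow_le_rpow_of_nonpos hx1 (by linarith) (by linarith)
    have h3 : max M 0 = (max M 0 * (1 + Kc) ^ q) * (1 + Kc) ^ (-q) := by
      rw [mul_assoc, ← Real.rpow_add (by linarith)]
      simp
    calc |f x| ≤ max M 0 := h1
      _ = (max M 0 * (1 + Kc) ^ q) * (1 + Kc) ^ (-q) := h3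
      _ ≤ D * (1 + |x|) ^ (-q) := by
        refine mul_le_mul ?_ h2 (Real.rpow_nonneg (by linarith) _) hD0.le
        calc max M 0 * (1 + Kc) ^ q ≤ max (max M 0 * (1 + Kc) ^ q) (|c| * 2 ^ q) :=
              le_max_left _ _
          _ ≤ D := by rw [hD]; linarith
  · push_neg at hx
    have hx0 : (0:ℝ) < |x| := by linarith
    have h1 : |f x| ≤ |c| * |x| ^ (-q) :=
      le_trans (h x hx.le) (mul_le_mul_of_nonneg_right (le_abs_self c) (Real.rpow_nonneg hx0.le _))
    have h2 : |x| ^ (-q) ≤ 2 ^ q * (1 + |x|) ^ (-q) :=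
      rpow_neg_compare hx0 hx1 hq.le (by linarith)
    calc |f x| ≤ |c| * (2 ^ q * (1 + |x|) ^ (-q)) :=
          le_trans h1 (mul_le_mul_of_nonneg_left h2 (abs_nonneg c))
      _ = (|c| * 2 ^ q) * (1 + |x|) ^ (-q) := by ring
      _ ≤ D * (1 + |x|) ^ (-q) := by
        refine mul_le_mul_of_nonneg_right ?_ (Real.rpow_nonneg hx1.le _)
        calc |c| * 2 ^ q ≤ max (max M 0 * (1 + Kc) ^ q) (|c| * 2 ^ q) := le_max_right _ _
          _ ≤ D := by rw [hD]; linarith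

end MRaux
namespace MRaux

variable {σ : ℝ → ℝ} {m : ℕ} {β : ℝ} {K C : ℕ → ℝ}

lemma phi_decay (hσ : ContDiff ℝ m σ) (hm : 2 ≤ m) (hβ : (m : ℝ) + 1 < β)
    (hKC : ∀ s : ℕ, 1 ≤ s → s ≤ m → 0 < K s ∧ 0 < C s ∧
      ∀ x : ℝ, K s ≤ |x| → |iteratedDeriv s σ x| ≤ C s * |x| ^ (-β - 1))
    (r : ℕ) (hr : r ≤ m) :
    ∃ D : ℝ, 0 < D ∧ ∀ x : ℝ, |iteratedDeriv r (phiFn σ) x| ≤ D * (1 + |x|) ^ (-(β + 1)) := by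
  have hq : (0:ℝ) < β + 1 := by
    have : (0:ℝ) ≤ (m:ℝ) := Nat.cast_nonneg m
    linarith
  have hexp : -β - 1 = -(β + 1) := by ring
  have hcont : Continuous (iteratedDeriv r (phiFn σ)) :=
    (phi_contDiff hσ).continuous_iteratedDeriv r (by exact_mod_cast hr)
  rcases Nat.eq_zero_or_pos r with hr0 | hrpos
  · -- r = 0 : mean value theorem
    subst hr0
    obtain ⟨hK1, hC1, hb1⟩ := hKC 1 le_rfl (le_trans (by norm_num) hm)
    have houter : ∀ x : ℝ, K 1 + 2 ≤ |x| →
        |iteratedDeriv 0 (phiFn σ) x| ≤ (C 1 * 2 ^ (β + 1)) * |x| ^ (-(β + 1)) := by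
      intro x hx
      have hσd : Differentiable ℝ σ := hσ.differentiable (by norm_cast; omega)
      have hab : x - 1 < x + 1 := by linarith
      obtain ⟨c, hc, hceq⟩ := exists_hasDerivAt_eq_slope σ (deriv σ)
        hab hσd.continuous.continuousOn (fun y _ => (hσd y).hasDerivAt)
      have hslope : (σ (x + 1) - σ (x - 1)) / (x + 1 - (x - 1)) = phiFn σ x := by
        have : x + 1 - (x - 1) = 2 := by ring
        rw [this]; rfl
      have hphic : phiFn σ x = deriv σ c := by rw [← hslope, hceq]
      have hxc : |x - c| ≤ 1 := by
        rw [abs_le]; constructor <;> [linarith [hc.2]; linarith [hc.1]]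
      have hcx : |x| - 1 ≤ |c| := by
        have := abs_sub_abs_le_abs_sub x c
        linarith
      have hKc : K 1 ≤ |c| := by linarith
      have hc0 : (0:ℝ) < |x| - 1 := by linarith
      have h1 : |deriv σ c| ≤ C 1 * |c| ^ (-(β + 1)) := by
        have := hb1 c hKc
        rwa [hexp, iteratedDeriv_one] at this
      have h2 : |c| ^ (-(β + 1)) ≤ (|x| - 1) ^ (-(β + 1)) :=
        Real.rpow_le_rpow_of_nonpos hc0 hcx (by linarith)
      have h3 : (|x| - 1) ^ (-(β + 1)) ≤ 2 ^ (β + 1) * |x| ^ (-(β + 1)) :=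
        rpow_neg_compare hc0 (by linarith) hq.le (by linarith)
      rw [iteratedDeriv_zero, hphic]
      calc |deriv σ c| ≤ C 1 * (|x| - 1) ^ (-(β + 1)) :=
            le_trans h1 (mul_le_mul_of_nonneg_left h2 hC1.le)
        _ ≤ C 1 * (2 ^ (β + 1) * |x| ^ (-(β + 1))) := mul_le_mul_of_nonneg_left h3 hC1.le
        _ = (C 1 * 2 ^ (β + 1)) * |x| ^ (-(β + 1)) := by ring
    have := bound_glue hcont hq (by linarith : (1:ℝ) ≤ K 1 + 2) houter
    simpa using this
  · -- r ≥ 1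
    obtain ⟨hKr, hCr, hbr⟩ := hKC r hrpos hr
    have hphir := iteratedDeriv_phi hσ hr
    have houter : ∀ x : ℝ, K r + 2 ≤ |x| →
        |iteratedDeriv r (phiFn σ) x| ≤ (C r * 2 ^ (β + 1)) * |x| ^ (-(β + 1)) := by
      intro x hx
      have hc0 : (0:ℝ) < |x| - 1 := by linarith
      have hbound : ∀ y : ℝ, |x - y| ≤ 1 →
          |iteratedDeriv r σ y| ≤ C r * (|x| - 1) ^ (-(β + 1)) := by
        intro y hy
        have hcy : |x| - 1 ≤ |y| := by
          have := abs_sub_abs_le_abs_sub x y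
          linarith
        have h1 : |iteratedDeriv r σ y| ≤ C r * |y| ^ (-(β + 1)) := by
          have := hbr y (by linarith)
          rwa [hexp] at this
        have h2 : |y| ^ (-(β + 1)) ≤ (|x| - 1) ^ (-(β + 1)) :=
          Real.rpow_le_rpow_of_nonpos hc0 hcy (by linarith)
        exact le_trans h1 (mul_le_mul_of_nonneg_left h2 hCr.le)
      have e1 := hbound (x + 1) (by rw [abs_le]; constructor <;> [norm_num; norm_num])
      have e2 := hbound (x - 1) (by rw [abs_le]; constructor <;> [norm_num; norm_num])
      have h3 : (|x| - 1) ^ (-(β + 1)) ≤ 2 ^ (β + 1) * |x| ^ (-(β + 1)) :=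
        rpow_neg_compare hc0 (by linarith) hq.le (by linarith)
      have habs : |iteratedDeriv r (phiFn σ) x| ≤ C r * (|x| - 1) ^ (-(β + 1)) := by
        rw [hphir]
        simp only []
        calc |(iteratedDeriv r σ (x + 1) - iteratedDeriv r σ (x - 1)) / 2|
            = |iteratedDeriv r σ (x + 1) - iteratedDeriv r σ (x - 1)| / 2 := by
              rw [abs_div]; norm_num
          _ ≤ (|iteratedDeriv r σ (x + 1)| + |iteratedDeriv r σ (x - 1)|) / 2 := by
              have h : |iteratedDeriv r σ (x + 1) - iteratedDeriv r σ (x - 1)|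
                  ≤ |iteratedDeriv r σ (x + 1)| + |iteratedDeriv r σ (x - 1)| := by
                rw [sub_eq_add_neg]
                exact (abs_add_le _ _).trans (by rw [abs_neg])
              linarith
          _ ≤ (C r * (|x| - 1) ^ (-(β + 1)) + C r * (|x| - 1) ^ (-(β + 1))) / 2 := by
              linarith
          _ = C r * (|x| - 1) ^ (-(β + 1)) := by ring
      calc |iteratedDeriv r (phiFn σ) x| ≤ C r * (|x| - 1) ^ (-(β + 1)) := habs
        _ ≤ C r * (2 ^ (β + 1) * |x| ^ (-(β + 1))) := mul_le_mul_of_nonneg_left h3 hCr.le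
        _ = (C r * 2 ^ (β + 1)) * |x| ^ (-(β + 1)) := by ring
    have := bound_glue hcont hq (by linarith : (1:ℝ) ≤ K r + 2) houter
    simpa using this

end MRaux
namespace MRaux

lemma summable_shift (c : ℝ) {q : ℝ} (hq : 1 < q) :
    Summable (fun k : ℤ => (1 + |c - (k : ℝ)|) ^ (-q)) := by
  have hg : Summable (fun k : ℤ => 2 ^ q * |(k : ℝ)| ^ (-q)) :=
    (Real.summable_abs_int_rpow hq).mul_left _
  apply Summable.of_norm_bounded_eventually hg
  rw [Filter.eventually_cofinite]
  have hfin : {k : ℤ | |(k : ℝ)| < 2 * |c| + 2}.Finite := by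
    apply Set.Finite.subset (Set.finite_Icc (-(⌈2 * |c| + 2⌉)) ⌈2 * |c| + 2⌉)
    intro k hk
    simp only [Set.mem_setOf_eq] at hk
    have h1 : (k : ℝ) ≤ (⌈2 * |c| + 2⌉ : ℤ) := by
      calc (k : ℝ) ≤ |(k : ℝ)| := le_abs_self _
        _ ≤ 2 * |c| + 2 := hk.le
        _ ≤ (⌈2 * |c| + 2⌉ : ℤ) := Int.le_ceil _
    have h2 : ((-(⌈2 * |c| + 2⌉) : ℤ) : ℝ) ≤ (k : ℝ) := by
      push_cast
      calc -((⌈2 * |c| + 2⌉ : ℤ) : ℝ) ≤ -(2 * |c| + 2) := by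
            have := Int.le_ceil (2 * |c| + 2); linarith
        _ ≤ -|(k : ℝ)| := by linarith
        _ ≤ (k : ℝ) := neg_abs_le _
    exact Set.mem_Icc.mpr ⟨by exact_mod_cast h2, by exact_mod_cast h1⟩
  apply Set.Finite.subset hfin
  intro k hk
  simp only [Set.mem_setOf_eq] at hk ⊢
  by_contra h
  push_neg at h
  apply hk
  have hk2 : (0:ℝ) < |(k:ℝ)| := by
    have : (0:ℝ) ≤ |c| := abs_nonneg c
    linarith
  have ha : (0:ℝ) < 1 + |c - (k:ℝ)| := by positivity
  have htri : |(k:ℝ)| - |c| ≤ |c - (k:ℝ)| := by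
    have := abs_sub_abs_le_abs_sub (k:ℝ) c
    rw [abs_sub_comm] at this
    linarith
  have hcmp : |(k:ℝ)| ≤ 2 * (1 + |c - (k:ℝ)|) := by linarith
  rw [Real.norm_eq_abs, abs_of_nonneg (Real.rpow_nonneg ha.le _)]
  exact rpow_neg_compare ha hk2 (by linarith) hcmp

lemma summable_aux (x : ℝ) {q : ℝ} (ℓ : ℕ) (hq : (ℓ : ℝ) + 1 < q) :
    Summable (fun k : ℤ => (1 + |x - (k : ℝ)|) ^ ((ℓ : ℝ) - q)) := by
  have h := summable_shift x (q := q - ℓ) (by linarith)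
  have he : ∀ k : ℤ, (1 + |x - (k : ℝ)|) ^ ((ℓ : ℝ) - q) = (1 + |x - (k : ℝ)|) ^ (-(q - (ℓ:ℝ))) := by
    intro k; congr 1; ring
  simpa only [he] using h

lemma term_bound {f : ℝ → ℝ} {D q : ℝ} (hf : ∀ y, |f y| ≤ D * (1 + |y|) ^ (-q))
    (ℓ : ℕ) (x : ℝ) (k : ℤ) :
    |f (x - (k:ℝ)) * ((k : ℝ) - x) ^ ℓ| ≤ D * (1 + |x - (k:ℝ)|) ^ ((ℓ : ℝ) - q) := by
  have h1 : (0:ℝ) < 1 + |x - (k:ℝ)| := by positivity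
  rw [abs_mul, abs_pow]
  have h2 : |(k:ℝ) - x| = |x - (k:ℝ)| := abs_sub_comm _ _
  have h3 : |(k:ℝ) - x| ^ ℓ ≤ (1 + |x - (k:ℝ)|) ^ (ℓ:ℝ) := by
    rw [Real.rpow_natCast, h2]
    exact pow_le_pow_left₀ (abs_nonneg _) (by linarith) ℓ
  calc |f (x - (k:ℝ))| * |(k:ℝ) - x| ^ ℓ
      ≤ (D * (1 + |x - (k:ℝ)|) ^ (-q)) * ((1 + |x - (k:ℝ)|) ^ (ℓ:ℝ)) :=
        mul_le_mul (hf _) h3 (pow_nonneg (abs_nonneg _) _)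
          (le_trans (abs_nonneg _) (hf (x - (k:ℝ))))
    _ = D * (1 + |x - (k:ℝ)|) ^ ((ℓ:ℝ) - q) := by
        rw [mul_assoc, ← Real.rpow_add h1]
        congr 2
        ring

lemma summable_term {f : ℝ → ℝ} {D q : ℝ} (hD : 0 ≤ D)
    (hf : ∀ y, |f y| ≤ D * (1 + |y|) ^ (-q)) (ℓ : ℕ) (hq : (ℓ : ℝ) + 1 < q) (x : ℝ) :
    Summable (fun k : ℤ => f (x - (k:ℝ)) * ((k : ℝ) - x) ^ ℓ) := by
  apply Summable.of_norm_bounded ((summable_aux x ℓ hq).mul_left D)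
  intro k
  rw [Real.norm_eq_abs]
  exact term_bound hf ℓ x k

end MRaux
namespace MRaux

lemma hasDerivAt_moment {g g' : ℝ → ℝ} {D₀ D₁ q : ℝ}
    (hg : ∀ y, HasDerivAt g (g' y) y)
    (hd0 : ∀ y, |g y| ≤ D₀ * (1 + |y|) ^ (-q))
    (hd1 : ∀ y, |g' y| ≤ D₁ * (1 + |y|) ^ (-q))
    (ℓ : ℕ) (hq : (ℓ : ℝ) + 1 < q) (x₀ : ℝ) :
    HasDerivAt (fun x => algMoment g ℓ x)
      (algMoment g' ℓ x₀ - ℓ * algMoment g (ℓ - 1) x₀) x₀ := by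
  have hD0 : 0 ≤ D₀ := by
    have h := (abs_nonneg (g 0)).trans (hd0 0)
    have hp : (0:ℝ) < (1 + |(0:ℝ)|) ^ (-q) := Real.rpow_pos_of_pos (by norm_num) _
    nlinarith
  have hD1 : 0 ≤ D₁ := by
    have h := (abs_nonneg (g' 0)).trans (hd1 0)
    have hp : (0:ℝ) < (1 + |(0:ℝ)|) ^ (-q) := Real.rpow_pos_of_pos (by norm_num) _
    nlinarith
  have hq1 : (1:ℝ) < q := by
    have : (0:ℝ) ≤ (ℓ:ℝ) := Nat.cast_nonneg ℓ
    linarith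
  have hq' : ((ℓ - 1 : ℕ) : ℝ) + 1 < q := by
    have : ((ℓ - 1 : ℕ) : ℝ) ≤ (ℓ : ℝ) := by exact_mod_cast Nat.sub_le ℓ 1
    linarith
  -- the term functions and their derivatives
  set T : ℤ → ℝ → ℝ := fun k x => g (x - (k:ℝ)) * ((k:ℝ) - x) ^ ℓ with hT
  set T' : ℤ → ℝ → ℝ := fun k x =>
    g' (x - (k:ℝ)) * ((k:ℝ) - x) ^ ℓ - (ℓ:ℝ) * (g (x - (k:ℝ)) * ((k:ℝ) - x) ^ (ℓ - 1)) with hT'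
  have hTd : ∀ (k : ℤ) (x : ℝ), HasDerivAt (T k) (T' k x) x := by
    intro k x
    have h1 : HasDerivAt (fun x : ℝ => g (x - (k:ℝ))) (g' (x - (k:ℝ))) x := by
      have := (hg (x - (k:ℝ))).comp x ((hasDerivAt_id x).sub_const (k:ℝ))
      simpa [Function.comp_def] using this
    have h2 : HasDerivAt (fun x : ℝ => ((k:ℝ) - x) ^ ℓ)
        ((ℓ:ℝ) * ((k:ℝ) - x) ^ (ℓ - 1) * (-1)) x :=
      ((hasDerivAt_id x).const_sub (k:ℝ)).pow ℓ
    have := h1.fun_mul h2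
    refine this.congr_deriv ?_
    simp only [hT']
    ring
  -- uniform convergence of the derivative series on the ball
  set s : Set ℝ := Metric.ball x₀ 1 with hs
  have hball : ∀ y ∈ s, ∀ k : ℤ, ‖T' k y‖ ≤
      ((D₁ + ℓ * D₀) * 2 ^ (q - ℓ)) * (1 + |x₀ - (k:ℝ)|) ^ ((ℓ:ℝ) - q) := by
    intro y hy k
    have hy1 : |x₀ - y| < 1 := by
      rw [Metric.mem_ball, Real.dist_eq, abs_sub_comm] at hy
      exact hy
    have ha : (0:ℝ) < 1 + |y - (k:ℝ)| := by positivity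
    have hb : (0:ℝ) < 1 + |x₀ - (k:ℝ)| := by positivity
    have h1 : |g' (y - (k:ℝ)) * ((k:ℝ) - y) ^ ℓ| ≤ D₁ * (1 + |y - (k:ℝ)|) ^ ((ℓ:ℝ) - q) :=
      term_bound hd1 ℓ y k
    have h2 : |g (y - (k:ℝ)) * ((k:ℝ) - y) ^ (ℓ - 1)|
        ≤ D₀ * (1 + |y - (k:ℝ)|) ^ ((ℓ:ℝ) - q) := by
      refine le_trans (term_bound hd0 (ℓ - 1) y k) ?_
      apply mul_le_mul_of_nonneg_left _ hD0
      apply Real.rpow_le_rpow_of_exponent_le (by linarith [abs_nonneg (y - (k:ℝ))])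
      have : ((ℓ - 1 : ℕ) : ℝ) ≤ (ℓ : ℝ) := by exact_mod_cast Nat.sub_le ℓ 1
      linarith
    have h3 : ‖T' k y‖ ≤ (D₁ + ℓ * D₀) * (1 + |y - (k:ℝ)|) ^ ((ℓ:ℝ) - q) := by
      rw [Real.norm_eq_abs, hT']
      have habs1 : |(ℓ:ℝ) * (g (y - (k:ℝ)) * ((k:ℝ) - y) ^ (ℓ - 1))|
          = (ℓ:ℝ) * |g (y - (k:ℝ)) * ((k:ℝ) - y) ^ (ℓ - 1)| := by
        rw [abs_mul, Nat.abs_cast]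
      calc |g' (y - (k:ℝ)) * ((k:ℝ) - y) ^ ℓ - (ℓ:ℝ) * (g (y - (k:ℝ)) * ((k:ℝ) - y) ^ (ℓ - 1))|
          ≤ |g' (y - (k:ℝ)) * ((k:ℝ) - y) ^ ℓ|
            + (ℓ:ℝ) * |g (y - (k:ℝ)) * ((k:ℝ) - y) ^ (ℓ - 1)| := by
            rw [sub_eq_add_neg]
            refine (abs_add_le _ _).trans ?_
            rw [abs_neg, habs1]
        _ ≤ D₁ * (1 + |y - (k:ℝ)|) ^ ((ℓ:ℝ) - q)
            + (ℓ:ℝ) * (D₀ * (1 + |y - (k:ℝ)|) ^ ((ℓ:ℝ) - q)) := by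
            have := mul_le_mul_of_nonneg_left h2 (Nat.cast_nonneg ℓ : (0:ℝ) ≤ (ℓ:ℝ))
            linarith
        _ = (D₁ + ℓ * D₀) * (1 + |y - (k:ℝ)|) ^ ((ℓ:ℝ) - q) := by ring
    have h4 : (1 + |y - (k:ℝ)|) ^ ((ℓ:ℝ) - q)
        ≤ 2 ^ (q - ℓ) * (1 + |x₀ - (k:ℝ)|) ^ ((ℓ:ℝ) - q) := by
      have hcmp : 1 + |x₀ - (k:ℝ)| ≤ 2 * (1 + |y - (k:ℝ)|) := by
        have htri : |x₀ - (k:ℝ)| ≤ |x₀ - y| + |y - (k:ℝ)| := abs_sub_le _ _ _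
        linarith [abs_nonneg (y - (k:ℝ))]
      have := rpow_neg_compare ha hb (by linarith : (0:ℝ) ≤ q - ℓ) hcmp
      have he1 : (ℓ:ℝ) - q = -(q - (ℓ:ℝ)) := by ring
      rw [he1]
      exact this
    calc ‖T' k y‖ ≤ (D₁ + ℓ * D₀) * (1 + |y - (k:ℝ)|) ^ ((ℓ:ℝ) - q) := h3
      _ ≤ (D₁ + ℓ * D₀) * (2 ^ (q - ℓ) * (1 + |x₀ - (k:ℝ)|) ^ ((ℓ:ℝ) - q)) := by
          apply mul_le_mul_of_nonneg_left h4
          positivity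
      _ = ((D₁ + ℓ * D₀) * 2 ^ (q - ℓ)) * (1 + |x₀ - (k:ℝ)|) ^ ((ℓ:ℝ) - q) := by ring
  have husum : Summable (fun k : ℤ =>
      ((D₁ + ℓ * D₀) * 2 ^ (q - ℓ)) * (1 + |x₀ - (k:ℝ)|) ^ ((ℓ:ℝ) - q)) :=
    (summable_aux x₀ ℓ hq).mul_left _
  have hunif : TendstoUniformlyOn (fun (t : Finset ℤ) x => ∑ k ∈ t, T' k x)
      (fun x => ∑' k : ℤ, T' k x) Filter.atTop s :=
    tendstoUniformlyOn_tsum husum (fun k y hy => hball y hy k)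
  have hpt : ∀ x ∈ s, Filter.Tendsto (fun t : Finset ℤ => ∑ k ∈ t, T k x)
      Filter.atTop (𝓝 (algMoment g ℓ x)) := by
    intro x _
    exact (summable_term hD0 hd0 ℓ hq x).hasSum
  have hmain : HasDerivAt (fun x => algMoment g ℓ x) ((fun x => ∑' k : ℤ, T' k x) x₀) x₀ := by
    refine hasDerivAt_of_tendstoUniformlyOn Metric.isOpen_ball hunif ?_ hpt ?_
    · exact Filter.Eventually.of_forall fun t => fun x _ => HasDerivAt.fun_sum fun k _ => hTd k x
    · exact Metric.mem_ball_self one_pos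
  have hsa : Summable (fun k : ℤ => g' (x₀ - (k:ℝ)) * ((k:ℝ) - x₀) ^ ℓ) :=
    summable_term hD1 hd1 ℓ hq x₀
  have hsb : Summable (fun k : ℤ => g (x₀ - (k:ℝ)) * ((k:ℝ) - x₀) ^ (ℓ - 1)) :=
    summable_term hD0 hd0 (ℓ - 1) hq' x₀
  have heval : (∑' k : ℤ, (g' (x₀ - (k:ℝ)) * ((k:ℝ) - x₀) ^ ℓ
        - (ℓ:ℝ) * (g (x₀ - (k:ℝ)) * ((k:ℝ) - x₀) ^ (ℓ - 1))))
      = algMoment g' ℓ x₀ - ℓ * algMoment g (ℓ - 1) x₀ := by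
    rw [hsa.tsum_sub (hsb.mul_left (ℓ:ℝ)), tsum_mul_left]
    rfl
  have hmain2 : HasDerivAt (fun x => algMoment g ℓ x)
      (∑' k : ℤ, (g' (x₀ - (k:ℝ)) * ((k:ℝ) - x₀) ^ ℓ
        - (ℓ:ℝ) * (g (x₀ - (k:ℝ)) * ((k:ℝ) - x₀) ^ (ℓ - 1)))) x₀ := hmain
  rwa [heval] at hmain2

end MRaux
namespace MRaux

lemma partition_unity {σ : ℝ → ℝ} {D q : ℝ} (hq : 1 < q)
    (hd : ∀ y, |phiFn σ y| ≤ D * (1 + |y|) ^ (-q))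
    (hbot : Filter.Tendsto σ Filter.atBot (𝓝 0))
    (htop : Filter.Tendsto σ Filter.atTop (𝓝 1)) (x : ℝ) :
    algMoment (phiFn σ) 0 x = 1 := by
  have hD0 : 0 ≤ D := by
    have h := (abs_nonneg (phiFn σ 0)).trans (hd 0)
    have hp : (0:ℝ) < (1 + |(0:ℝ)|) ^ (-q) := Real.rpow_pos_of_pos (by norm_num) _
    nlinarith
  have hsum : Summable (fun k : ℤ => phiFn σ (x - (k:ℝ)) * ((k:ℝ) - x) ^ 0) :=
    summable_term hD0 hd 0 (by push_cast; linarith) x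
  have hs : HasSum (fun k : ℤ => phiFn σ (x - (k:ℝ)) * ((k:ℝ) - x) ^ 0)
      (algMoment (phiFn σ) 0 x) := hsum.hasSum
  -- partial sums over Icc (-N) N telescope
  have hpartial : ∀ N : ℕ, ∑ k ∈ Finset.Icc (-(N:ℤ)) (N:ℤ),
      phiFn σ (x - (k:ℝ)) * ((k:ℝ) - x) ^ 0
      = (σ (x + N + 1) + σ (x + N) - σ (x - N) - σ (x - N - 1)) / 2 := by
    intro N
    induction N with
    | zero => simp [phiFn]
    | succ N ih =>
      have hsplit : Finset.Icc (-(N+1:ℕ):ℤ) ((N+1:ℕ):ℤ)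
          = insert (-(N+1:ℕ):ℤ) (insert ((N+1:ℕ):ℤ) (Finset.Icc (-(N:ℕ):ℤ) (N:ℕ))) := by
        ext k
        simp only [Finset.mem_Icc, Finset.mem_insert]
        omega
      rw [hsplit, Finset.sum_insert, Finset.sum_insert, ih]
      · simp only [pow_zero, mul_one, phiFn]
        push_cast
        have e1 : x - -((N:ℝ) + 1) + 1 = x + N + 1 + 1 := by ring
        have e2 : x - -((N:ℝ) + 1) - 1 = x + N := by ring
        have e3 : x - ((N:ℝ) + 1) + 1 = x - N := by ring
        have e4 : x - ((N:ℝ) + 1) - 1 = x - N - 1 - 1 := by ring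
        have e5 : x + ((N:ℝ) + 1) + 1 = x + N + 1 + 1 := by ring
        have e6 : x + ((N:ℝ) + 1) = x + N + 1 := by ring
        have e7 : x - ((N:ℝ) + 1) = x - N - 1 := by ring
        have e8 : x - ((N:ℝ) + 1) - 1 = x - N - 1 - 1 := by ring
        rw [e1, e2, e3, e4, e5, e6, e7]
        ring
      · simp only [Finset.mem_Icc]; omega
      · simp only [Finset.mem_insert, Finset.mem_Icc]; omega
  -- the limit of the telescoped expression is 1
  have hx1 : Filter.Tendsto (fun N : ℕ => x + (N:ℝ) + 1) Filter.atTop Filter.atTop := by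
    apply Filter.tendsto_atTop_add_const_right
    apply Filter.tendsto_atTop_add_const_left
    exact tendsto_natCast_atTop_atTop
  have hx2 : Filter.Tendsto (fun N : ℕ => x + (N:ℝ)) Filter.atTop Filter.atTop :=
    Filter.tendsto_atTop_add_const_left _ _ tendsto_natCast_atTop_atTop
  have hx3 : Filter.Tendsto (fun N : ℕ => x - (N:ℝ)) Filter.atTop Filter.atBot := by
    apply Filter.tendsto_atBot_add_const_left
    rw [Filter.tendsto_neg_atBot_iff]
    exact tendsto_natCast_atTop_atTop
  have hx4 : Filter.Tendsto (fun N : ℕ => x - (N:ℝ) - 1) Filter.atTop Filter.atBot :=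
    Filter.tendsto_atBot_add_const_right _ _ hx3
  have hlim : Filter.Tendsto
      (fun N : ℕ => (σ (x + N + 1) + σ (x + N) - σ (x - N) - σ (x - N - 1)) / 2)
      Filter.atTop (𝓝 ((1 + 1 - 0 - 0) / 2)) := by
    exact ((((htop.comp hx1).add (htop.comp hx2)).sub (hbot.comp hx3)).sub
      (hbot.comp hx4)).div_const 2
  have hIcc : Filter.Tendsto (fun N : ℕ => Finset.Icc (-(N:ℤ)) (N:ℤ))
      Filter.atTop Filter.atTop := by
    apply Filter.tendsto_atTop_finset_of_monotone
    · intro a b hab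
      apply Finset.Icc_subset_Icc <;> [simp; skip] <;> exact_mod_cast hab
    · intro k
      exact ⟨k.natAbs, by simp only [Finset.mem_Icc]; omega⟩
  have hs' : Filter.Tendsto (fun t : Finset ℤ => ∑ k ∈ t, phiFn σ (x - (k:ℝ)) * ((k:ℝ) - x) ^ 0)
      Filter.atTop (𝓝 (algMoment (phiFn σ) 0 x)) := hs
  have htend : Filter.Tendsto (fun N : ℕ => ∑ k ∈ Finset.Icc (-(N:ℤ)) (N:ℤ),
      phiFn σ (x - (k:ℝ)) * ((k:ℝ) - x) ^ 0) Filter.atTop (𝓝 (algMoment (phiFn σ) 0 x)) := by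
    simpa [Function.comp_def] using hs'.comp hIcc
  have htend2 : Filter.Tendsto (fun N : ℕ => ∑ k ∈ Finset.Icc (-(N:ℤ)) (N:ℤ),
      phiFn σ (x - (k:ℝ)) * ((k:ℝ) - x) ^ 0) Filter.atTop (𝓝 ((1 + 1 - 0 - 0) / 2)) := by
    simp only [hpartial]
    exact hlim
  have := tendsto_nhds_unique htend htend2
  rw [this]
  norm_num

end MRaux
namespace MRaux

lemma desc_identity (i j ℓ : ℕ) :
    (j.choose ℓ) * ((i+1).descFactorial (j - ℓ)) =
      (j.choose ℓ) * (i.descFactorial (j - ℓ))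
        + (ℓ+1) * (j.choose (ℓ+1)) * (i.descFactorial (j - ℓ - 1)) := by
  rcases le_or_gt j ℓ with h | h
  · have h1 : j - ℓ = 0 := by omega
    have h2 : j.choose (ℓ+1) = 0 := Nat.choose_eq_zero_of_lt (by omega)
    simp [h1, h2]
  · obtain ⟨k, hk⟩ : ∃ k, j - ℓ = k + 1 := ⟨j - ℓ - 1, by omega⟩
    have h3 : k + 1 - 1 = k := by omega
    rw [hk, h3, Nat.succ_descFactorial_succ, Nat.descFactorial_succ]
    have hc : (ℓ+1) * j.choose (ℓ+1) = (k+1) * j.choose ℓ := by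
      have h4 := Nat.choose_succ_right_eq j ℓ
      have h5 : j - ℓ = k + 1 := hk
      rw [h5] at h4
      -- h4 : j.choose (ℓ+1) * (ℓ+1) = j.choose ℓ * (k+1)
      calc (ℓ+1) * j.choose (ℓ+1) = j.choose (ℓ+1) * (ℓ+1) := by ring
        _ = j.choose ℓ * (k+1) := h4
        _ = (k+1) * j.choose ℓ := by ring
    rcases le_or_gt k i with hki | hki
    · have he : i + 1 = (i - k) + (k + 1) := by omega
      calc j.choose ℓ * ((i + 1) * i.descFactorial k)
          = j.choose ℓ * ((i - k) * i.descFactorial k)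
            + (k+1) * j.choose ℓ * i.descFactorial k := by rw [he]; ring
        _ = j.choose ℓ * ((i - k) * i.descFactorial k)
            + (ℓ+1) * j.choose (ℓ+1) * i.descFactorial k := by rw [hc]
    · have hz : i.descFactorial k = 0 := Nat.descFactorial_eq_zero_iff_lt.mpr hki
      simp [hz]

lemma coeff_identity (i j ℓ : ℕ) :
    (j.choose ℓ : ℝ) * ((i+1).descFactorial (j - ℓ) : ℝ) * (-1:ℝ)^(j+ℓ)
      = (j.choose ℓ : ℝ) * (i.descFactorial (j - ℓ) : ℝ) * (-1:ℝ)^(j+ℓ)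
        - ((ℓ:ℝ)+1) * ((j.choose (ℓ+1) : ℝ) * (i.descFactorial (j - ℓ - 1) : ℝ)
            * (-1:ℝ)^(j+(ℓ+1))) := by
  have h := desc_identity i j ℓ
  have hcast : ((j.choose ℓ : ℕ) : ℝ) * (((i+1).descFactorial (j - ℓ) : ℕ) : ℝ)
      = ((j.choose ℓ : ℕ) : ℝ) * ((i.descFactorial (j - ℓ) : ℕ) : ℝ)
        + ((ℓ:ℝ)+1) * ((j.choose (ℓ+1) : ℕ) : ℝ) * ((i.descFactorial (j - ℓ - 1) : ℕ) : ℝ) := by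
    exact_mod_cast congrArg (fun n : ℕ => (n : ℝ)) h
  have hpow : (-1:ℝ)^(j+(ℓ+1)) = -(-1:ℝ)^(j+ℓ) := by
    have : j + (ℓ + 1) = (j + ℓ) + 1 := by omega
    rw [this, pow_succ]
    ring
  rw [hpow]
  linear_combination ((-1:ℝ)^(j+ℓ)) * hcast

end MRaux
namespace MRaux

lemma sum_rearrange (j i : ℕ) (A B : ℕ → ℝ) (hAB : ∀ t, t < j → B (t + 1) = A t) :
    ∑ ℓ ∈ Finset.range (j + 1),
      (j.choose ℓ : ℝ) * (Nat.descFactorial i (j - ℓ) : ℝ) * (-1:ℝ)^(j+ℓ) * (A ℓ - (ℓ:ℝ) * B ℓ)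
    = ∑ ℓ ∈ Finset.range (j + 1),
      (j.choose ℓ : ℝ) * (Nat.descFactorial (i+1) (j - ℓ) : ℝ) * (-1:ℝ)^(j+ℓ) * A ℓ := by
  have hsplit : ∀ ℓ : ℕ,
      (j.choose ℓ : ℝ) * (Nat.descFactorial i (j - ℓ) : ℝ) * (-1:ℝ)^(j+ℓ) * (A ℓ - (ℓ:ℝ) * B ℓ)
      = (j.choose ℓ : ℝ) * (Nat.descFactorial i (j - ℓ) : ℝ) * (-1:ℝ)^(j+ℓ) * A ℓ
        - ((j.choose ℓ : ℝ) * (Nat.descFactorial i (j - ℓ) : ℝ) * (-1:ℝ)^(j+ℓ) * (ℓ:ℝ)) * B ℓ :=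
    fun ℓ => by ring
  rw [Finset.sum_congr rfl (fun ℓ _ => hsplit ℓ), Finset.sum_sub_distrib]
  -- second sum: reindex
  have hS2 : ∑ ℓ ∈ Finset.range (j + 1),
      ((j.choose ℓ : ℝ) * (Nat.descFactorial i (j - ℓ) : ℝ) * (-1:ℝ)^(j+ℓ) * (ℓ:ℝ)) * B ℓ
      = ∑ ℓ ∈ Finset.range (j + 1),
        (((ℓ:ℝ)+1) * ((j.choose (ℓ+1) : ℝ) * (Nat.descFactorial i (j - ℓ - 1) : ℝ)
          * (-1:ℝ)^(j+(ℓ+1)))) * A ℓ := by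
    rw [Finset.sum_range_succ' (fun ℓ =>
      ((j.choose ℓ : ℝ) * (Nat.descFactorial i (j - ℓ) : ℝ) * (-1:ℝ)^(j+ℓ) * (ℓ:ℝ)) * B ℓ) j]
    rw [Finset.sum_range_succ (fun ℓ =>
      (((ℓ:ℝ)+1) * ((j.choose (ℓ+1) : ℝ) * (Nat.descFactorial i (j - ℓ - 1) : ℝ)
        * (-1:ℝ)^(j+(ℓ+1)))) * A ℓ) j]
    have hlast : (((j:ℝ)+1) * ((j.choose (j+1) : ℝ) * (Nat.descFactorial i (j - j - 1) : ℝ)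
        * (-1:ℝ)^(j+(j+1)))) * A j = 0 := by
      rw [Nat.choose_succ_self]
      push_cast
      ring
    rw [hlast, add_zero]
    simp only [Nat.cast_zero, mul_zero, zero_mul, add_zero]
    apply Finset.sum_congr rfl
    intro t ht
    rw [Finset.mem_range] at ht
    rw [hAB t ht]
    have he : j - (t + 1) = j - t - 1 := by omega
    rw [he]
    push_cast
    ring
  rw [hS2, ← Finset.sum_sub_distrib]
  apply Finset.sum_congr rfl
  intro ℓ _
  have := coeff_identity i j ℓ
  calc (j.choose ℓ : ℝ) * (Nat.descFactorial i (j - ℓ) : ℝ) * (-1:ℝ)^(j+ℓ) * A ℓ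
      - (((ℓ:ℝ)+1) * ((j.choose (ℓ+1) : ℝ) * (Nat.descFactorial i (j - ℓ - 1) : ℝ)
          * (-1:ℝ)^(j+(ℓ+1)))) * A ℓ
      = ((j.choose ℓ : ℝ) * (Nat.descFactorial i (j - ℓ) : ℝ) * (-1:ℝ)^(j+ℓ)
        - ((ℓ:ℝ)+1) * ((j.choose (ℓ+1) : ℝ) * (Nat.descFactorial i (j - ℓ - 1) : ℝ)
          * (-1:ℝ)^(j+(ℓ+1)))) * A ℓ := by ring
    _ = (j.choose ℓ : ℝ) * (Nat.descFactorial (i+1) (j - ℓ) : ℝ) * (-1:ℝ)^(j+ℓ) * A ℓ := by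
        rw [← this]

end MRaux
namespace MRaux

noncomputable def Emom (σ : ℝ → ℝ) (j i : ℕ) (x : ℝ) : ℝ :=
  ∑ ℓ ∈ Finset.range (j + 1),
    (j.choose ℓ : ℝ) * (Nat.descFactorial i (j - ℓ) : ℝ) * (-1 : ℝ) ^ (j + ℓ) *
      algMoment (iteratedDeriv (ℓ + i - j) (phiFn σ)) ℓ x

variable {σ : ℝ → ℝ} {m : ℕ} {β : ℝ} {K C : ℕ → ℝ}

lemma Emom_hasDerivAt (hσm : ContDiff ℝ m σ) (hm2 : 2 ≤ m) (hβ : (m : ℝ) + 1 < β)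
    (hKC : ∀ s : ℕ, 1 ≤ s → s ≤ m → 0 < K s ∧ 0 < C s ∧
      ∀ x : ℝ, K s ≤ |x| → |iteratedDeriv s σ x| ≤ C s * |x| ^ (-β - 1))
    (j i : ℕ) (hjm : j ≤ m) (him : i + 1 ≤ m) (y : ℝ) :
    HasDerivAt (Emom σ j i) (Emom σ j (i + 1) y) y := by
  classical
  set φ := phiFn σ with hφ
  -- derivative of each term
  have hterm : ∀ ℓ, ℓ < j + 1 → HasDerivAt
      (fun x => (j.choose ℓ : ℝ) * (Nat.descFactorial i (j - ℓ) : ℝ) * (-1:ℝ)^(j+ℓ) *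
        algMoment (iteratedDeriv (ℓ + i - j) φ) ℓ x)
      ((j.choose ℓ : ℝ) * (Nat.descFactorial i (j - ℓ) : ℝ) * (-1:ℝ)^(j+ℓ) *
        (algMoment (iteratedDeriv (ℓ + (i+1) - j) φ) ℓ y
          - (ℓ:ℝ) * algMoment (iteratedDeriv (ℓ + i - j) φ) (ℓ - 1) y)) y := by
    intro ℓ hℓ
    rcases le_or_gt (j - ℓ) i with hle | hlt
    · -- genuine case
      have hr1 : ℓ + (i + 1) - j = (ℓ + i - j) + 1 := by omega
      rw [hr1]
      set r := ℓ + i - j with hr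
      have hrm : r < m := by omega
      have hrm1 : r + 1 ≤ m := by omega
      obtain ⟨D₀, hD₀, hd0⟩ := phi_decay hσm hm2 hβ hKC r (le_of_lt hrm)
      obtain ⟨D₁, hD₁, hd1⟩ := phi_decay hσm hm2 hβ hKC (r+1) hrm1
      have hdiff : Differentiable ℝ (iteratedDeriv r φ) :=
        (phi_contDiff hσm).differentiable_iteratedDeriv r (by exact_mod_cast hrm)
      have hg : ∀ z, HasDerivAt (iteratedDeriv r φ) (iteratedDeriv (r+1) φ z) z := by
        intro z
        have h := (hdiff z).hasDerivAt
        rwa [show iteratedDeriv (r+1) φ = deriv (iteratedDeriv r φ) from iteratedDeriv_succ]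
      have hq : (ℓ:ℝ) + 1 < β + 1 := by
        have h1 : (ℓ:ℝ) ≤ (m:ℝ) := by exact_mod_cast le_trans (by omega : ℓ ≤ j) hjm
        linarith
      have hmom := hasDerivAt_moment hg
        (by
          intro z
          have := hd0 z
          rwa [show -(β+1) = -(β+1) from rfl] at this)
        (fun z => hd1 z) ℓ (by
          have h1 : (ℓ:ℝ) ≤ (m:ℝ) := by exact_mod_cast le_trans (by omega : ℓ ≤ j) hjm
          linarith) y
      exact hmom.const_mul _
    · -- vanishing coefficient case
      have hdf : Nat.descFactorial i (j - ℓ) = 0 :=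
        Nat.descFactorial_eq_zero_iff_lt.mpr hlt
      have hc0 : (j.choose ℓ : ℝ) * (Nat.descFactorial i (j - ℓ) : ℝ) * (-1:ℝ)^(j+ℓ) = 0 := by
        rw [hdf]; push_cast; ring
      simp only [hc0, zero_mul]
      exact hasDerivAt_const y 0
  have hsum : HasDerivAt (Emom σ j i)
      (∑ ℓ ∈ Finset.range (j + 1),
        (j.choose ℓ : ℝ) * (Nat.descFactorial i (j - ℓ) : ℝ) * (-1:ℝ)^(j+ℓ) *
          (algMoment (iteratedDeriv (ℓ + (i+1) - j) φ) ℓ y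
            - (ℓ:ℝ) * algMoment (iteratedDeriv (ℓ + i - j) φ) (ℓ - 1) y)) y := by
    have := HasDerivAt.fun_sum (fun ℓ hℓ => hterm ℓ (Finset.mem_range.mp hℓ))
    exact this
  have hre := sum_rearrange j i
    (fun ℓ => algMoment (iteratedDeriv (ℓ + (i+1) - j) φ) ℓ y)
    (fun ℓ => algMoment (iteratedDeriv (ℓ + i - j) φ) (ℓ - 1) y)
    (by
      intro t ht
      have he : t + 1 + i - j = t + (i + 1) - j := by omega
      simp only [he, Nat.add_sub_cancel])
  rw [hre] at hsum
  exact hsum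

lemma Emom_zero_eq (j : ℕ) (x : ℝ) :
    Emom σ j 0 x = algMoment (phiFn σ) j x := by
  unfold Emom
  rw [Finset.sum_range_succ]
  have hzero : ∀ ℓ ∈ Finset.range j,
      (j.choose ℓ : ℝ) * (Nat.descFactorial 0 (j - ℓ) : ℝ) * (-1:ℝ)^(j+ℓ) *
        algMoment (iteratedDeriv (ℓ + 0 - j) (phiFn σ)) ℓ x = 0 := by
    intro ℓ hℓ
    rw [Finset.mem_range] at hℓ
    have hdf : Nat.descFactorial 0 (j - ℓ) = 0 := by
      have : j - ℓ = (j - ℓ - 1) + 1 := by omega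
      rw [this]
      exact Nat.zero_descFactorial_succ _
    rw [hdf]
    push_cast
    ring
  rw [Finset.sum_eq_zero hzero, zero_add]
  have h1 : j + 0 - j = 0 := by omega
  have h2 : j - j = 0 := by omega
  rw [h1, h2, iteratedDeriv_zero, Nat.choose_self, Nat.descFactorial_zero]
  have h3 : (-1:ℝ)^(j+j) = 1 := by
    rw [← two_mul, pow_mul]
    norm_num
  rw [h3]
  push_cast
  ring

end MRaux

theorem moment_recursion_identity (σ : ℝ → ℝ) (α β : ℝ) (m : ℕ) (K C : ℕ → ℝ) (A : ℕ → ℝ)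
    (hσ : Sigmoidal σ) (hmono : Monotone σ) (h1 : Sigma1 σ) (h2 : Sigma2 σ) (h3 : Sigma3 σ α)
    (h4 : Sigma4 σ m β K C) (h5 : Sigma5 σ m A)
    (s : ℕ) (hs1 : 1 ≤ s) (hsm : s ≤ m) (j : ℕ) (hj : j < s) (x : ℝ) :
    ∑ ℓ ∈ Finset.range (j + 1),
      (j.choose ℓ : ℝ) * (Nat.descFactorial s (j - ℓ) : ℝ) * (-1 : ℝ) ^ (j + ℓ) *
        algMoment (iteratedDeriv (ℓ + s - j) (phiFn σ)) ℓ x = 0 := by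
  obtain ⟨hm2, hβ, hσm, hKC⟩ := h4
  have hconst : ∀ a b : ℝ, MRaux.Emom σ j 0 a = MRaux.Emom σ j 0 b := by
    intro a b
    rw [MRaux.Emom_zero_eq j a, MRaux.Emom_zero_eq j b]
    rcases Nat.eq_zero_or_pos j with hj0 | hjpos
    · subst hj0
      obtain ⟨D, hD, hd⟩ := MRaux.phi_decay hσm hm2 hβ hKC 0 (Nat.zero_le m)
      have hq1 : (1:ℝ) < β + 1 := by
        have h0 : (0:ℝ) ≤ (m:ℝ) := Nat.cast_nonneg m
        linarith
      rw [MRaux.partition_unity hq1 hd hσ.2.1 hσ.2.2 a,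
        MRaux.partition_unity hq1 hd hσ.2.1 hσ.2.2 b]
    · rw [h5 j hjpos (by omega : j ≤ m) a, h5 j hjpos (by omega : j ≤ m) b]
  have hstep : ∀ i, i + 1 ≤ s → ∀ y : ℝ,
      HasDerivAt (MRaux.Emom σ j i) (MRaux.Emom σ j (i+1) y) y := by
    intro i hi y
    exact MRaux.Emom_hasDerivAt hσm hm2 hβ hKC j i (by omega) (by omega) y
  have hE : ∀ i, i + 1 ≤ s → ∀ y : ℝ, MRaux.Emom σ j (i+1) y = 0 := by
    intro i
    induction i with
    | zero =>
      intro hi y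
      have hfun : MRaux.Emom σ j 0 = fun _ => MRaux.Emom σ j 0 0 :=
        funext fun t => hconst t 0
      have h := hstep 0 hi y
      rw [hfun] at h
      exact h.unique (hasDerivAt_const y _)
    | succ i ih =>
      intro hi y
      have hfun : MRaux.Emom σ j (i+1) = fun _ => (0:ℝ) :=
        funext fun t => ih (by omega) t
      have h := hstep (i+1) hi y
      rw [hfun] at h
      exact h.unique (hasDerivAt_const y 0)
  obtain ⟨t, rfl⟩ : ∃ t, s = t + 1 := ⟨s - 1, by omega⟩
  exact hE t le_rfl x
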